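/- arXiv:1307.3586 — 8 statements merged into one kernel-verified Lean document; each statement's English description precedes it below -/
import Mathlib

section
/- Every 2×2 doubly nonnegative matrix whose entries sum to one can be written as a finite convex combination ∑ᵢ λᵢ wᵢ wᵢᵀ of outer products of probability vectors wᵢ ∈ ℝ². -/
def IsProbVec {m : ℕ} (w : Fin m → ℝ) : Prop :=
  (∀ i, 0 ≤ w i) ∧ ∑ i, w i = 1

def IsCondIID {m : ℕ} (W : Matrix (Fin m) (Fin m) ℝ) : Prop :=
  ∃ (k : ℕ) (lam : Fin k → ℝ) (w : Fin k → Fin m → ℝ),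
    (∀ i, 0 ≤ lam i) ∧ (∑ i, lam i = 1) ∧ (∀ i, IsProbVec (w i)) ∧
      ∀ a b, W a b = ∑ i, lam i * (w i a * w i b)

theorem stmt3 (W : Matrix (Fin 2) (Fin 2) ℝ)
    (hsymm : W.IsSymm) (hnonneg : ∀ a b, 0 ≤ W a b) (hpsd : W.PosSemidef)
    (hsum : ∑ a, ∑ b, W a b = 1) :
    IsCondIID W := by
  have hb : W 1 0 = W 0 1 := by
    have := congrFun (congrFun hsymm 0) 1
    simpa [Matrix.transpose_apply] using this
  have hq := hpsd.dotProduct_mulVec_nonneg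
  have hdet : 0 ≤ W 0 0 * (W 0 0 * W 1 1 - W 0 1 * W 0 1) := by
    have := hq ![W 0 1, -(W 0 0)]
    simp [Matrix.mulVec, dotProduct, Fin.sum_univ_two, hb] at this
    nlinarith
  have hbsq : W 0 0 = 0 → W 0 1 = 0 := by
    intro ha
    have := hq ![W 1 1 + 1, -(W 0 1)]
    simp [Matrix.mulVec, dotProduct, Fin.sum_univ_two, hb, ha] at this
    nlinarith [hnonneg 1 1, hnonneg 0 1]
  have hsum' : W 0 0 + W 0 1 + W 0 1 + W 1 1 = 1 := by
    simp [Fin.sum_univ_two, hb] at hsum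
    linarith
  have ha0 := hnonneg 0 0
  have hb0 := hnonneg 0 1
  have hc0 := hnonneg 1 1
  rcases eq_or_lt_of_le ha0 with ha | ha
  · -- W 0 0 = 0, hence W 0 1 = 0, W 1 1 = 1
    have hbz : W 0 1 = 0 := hbsq ha.symm
    have hcz : W 1 1 = 1 := by linarith
    refine ⟨2, ![0, 1], ![![1, 0], ![0, 1]], ?_, ?_, ?_, ?_⟩
    · intro i; fin_cases i <;> norm_num
    · simp [Fin.sum_univ_two]
    · intro i; fin_cases i <;>
        exact ⟨by intro j; fin_cases j <;> norm_num, by simp [Fin.sum_univ_two]⟩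
    · intro a b
      fin_cases a <;> fin_cases b <;>
        simp [Fin.sum_univ_two, hbz, hcz, hb, ← ha]
  · -- W 0 0 > 0
    set a := W 0 0
    set b := W 0 1
    set c := W 1 1
    have hs : 0 < a + b := by linarith
    refine ⟨2, ![(a + b) ^ 2 / a, c - b ^ 2 / a],
      ![![a / (a + b), b / (a + b)], ![0, 1]], ?_⟩
    have hdet' : 0 ≤ a * c - b * b := by nlinarith
    refine ⟨?_, ?_, ?_, ?_⟩
    · intro i; fin_cases i
      · show (0:ℝ) ≤ (a + b) ^ 2 / a
        positivity
      · show (0:ℝ) ≤ c - b ^ 2 / a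
        rw [sub_nonneg, div_le_iff₀ ha]
        nlinarith
    · simp only [Fin.sum_univ_two, Matrix.cons_val_zero, Matrix.cons_val_one,
        Matrix.head_cons]
      field_simp
      ring_nf
      nlinarith
    · intro i; fin_cases i
      · refine ⟨?_, ?_⟩
        · intro j; fin_cases j <;> simp <;> positivity
        · simp [Fin.sum_univ_two]
          field_simp
      · exact ⟨by intro j; fin_cases j <;> norm_num, by simp [Fin.sum_univ_two]⟩
    · intro x y
      fin_cases x <;> fin_cases y <;>
        · simp [Fin.sum_univ_two, hb]
          field_simp
          all_goals ring
end

section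
/- Let x, y ∈ ℝ^m be two distinct probability vectors. Then the symmetric matrix W = (1/2)(x yᵀ + y xᵀ) is not positive semidefinite; in particular there exists z ∈ ℝ^m with zᵀWz < 0. -/
theorem stmt5 {m : ℕ} (x y : Fin m → ℝ)
    (hx : IsProbVec x) (hy : IsProbVec y) (hne : x ≠ y)
    (W : Matrix (Fin m) (Fin m) ℝ)
    (hW : ∀ a b, W a b = (x a * y b + y a * x b) / 2) :
    ¬ W.PosSemidef ∧ ∃ z : Fin m → ℝ, ∑ a, ∑ b, z a * W a b * z b < 0 := by
  set a : ℝ := ∑ i, (y i - x i) * x i with ha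
  set b : ℝ := ∑ i, (y i - x i) * y i with hb
  set c : ℝ := (a + b) / 2 with hc
  set z : Fin m → ℝ := fun i => y i - x i - c with hz
  have hba : 0 < b - a := by
    have : b - a = ∑ i, (y i - x i) ^ 2 := by
      rw [hb, ha, ← Finset.sum_sub_distrib]
      exact Finset.sum_congr rfl fun i _ => by ring
    rw [this]
    obtain ⟨i, hi⟩ : ∃ i, x i ≠ y i := by
      by_contra h; push_neg at h; exact hne (funext h)
    apply Finset.sum_pos' (fun i _ => sq_nonneg _) ⟨i, Finset.mem_univ i, ?_⟩
    have : y i - x i ≠ 0 := sub_ne_zero.mpr (Ne.symm hi)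
    positivity
  have hp : ∑ i, z i * x i = (a - b) / 2 := by
    have : ∀ i, z i * x i = (y i - x i) * x i - c * x i := fun i => by
      simp only [hz]; ring
    simp_rw [this, Finset.sum_sub_distrib, ← Finset.mul_sum, hx.2, ← ha]
    rw [hc]; ring
  have hq : ∑ i, z i * y i = (b - a) / 2 := by
    have : ∀ i, z i * y i = (y i - x i) * y i - c * y i := fun i => by
      simp only [hz]; ring
    simp_rw [this, Finset.sum_sub_distrib, ← Finset.mul_sum, hy.2, ← hb]
    rw [hc]; ring
  have key : ∑ a, ∑ b, z a * W a b * z b =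
      (∑ i, z i * x i) * (∑ i, z i * y i) := by
    have inner : ∀ i, ∑ j, z i * W i j * z j =
        (z i * x i) * (∑ j, z j * y j) / 2 + (z i * y i) * (∑ j, z j * x j) / 2 := by
      intro i
      have h1 : ∀ j, z i * W i j * z j =
          (z i * x i) * (z j * y j) / 2 + (z i * y i) * (z j * x j) / 2 := fun j => by
        rw [hW]; ring
      simp_rw [h1, Finset.sum_add_distrib, ← Finset.sum_div, ← Finset.mul_sum]
    simp_rw [inner, Finset.sum_add_distrib, ← Finset.sum_div, ← Finset.sum_mul]
    ring
  have hneg : ∑ a, ∑ b, z a * W a b * z b < 0 := by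
    rw [key, hp, hq]
    nlinarith [hba]
  refine ⟨fun h => ?_, ⟨z, hneg⟩⟩
  have h2 := h.dotProduct_mulVec_nonneg z
  have h3 : dotProduct (star z) (W.mulVec z) = ∑ a, ∑ b, z a * W a b * z b := by
    simp [dotProduct, Matrix.mulVec, Finset.mul_sum, mul_assoc]
  rw [h3] at h2
  linarith
end

section
/- Let Γ be a symmetric 2×2 bimatrix game with row payoff matrix A = [[x,y],[z,w]]. Every extreme point of the set of exchangeable equilibria of Γ is a symmetric Nash equilibrium, i.e., has the form v vᵀ for a probability vector v satisfying the Nash conditions. Consequently, the set of exchangeable equilibria equals the convex hull of the symmetric Nash equilibria. -/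
def IsCorrEq {m : ℕ} (A : Matrix (Fin m) (Fin m) ℝ) (P : Matrix (Fin m) (Fin m) ℝ) : Prop :=
  (∀ a b, 0 ≤ P a b) ∧ (∑ a, ∑ b, P a b = 1) ∧
    (∀ s t, ∑ j, (A t j - A s j) * P s j ≤ 0) ∧
    (∀ s t, ∑ i, (A t i - A s i) * P i s ≤ 0)

/-- Symmetric Nash equilibrium: a probability vector that is a best response to itself. -/
def IsSymNash {m : ℕ} (A : Matrix (Fin m) (Fin m) ℝ) (v : Fin m → ℝ) : Prop :=
  IsProbVec v ∧ ∀ t, ∑ j, A t j * v j ≤ ∑ i, ∑ j, v i * A i j * v j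

lemma nash_mk (x y z w : ℝ) (v : Fin 2 → ℝ) (h0 : 0 ≤ v 0) (h1 : 0 ≤ v 1)
    (hs : v 0 + v 1 = 1)
    (hc1 : 0 ≤ v 0 * ((x - z) * v 0 - (w - y) * v 1))
    (hc2 : v 1 * ((x - z) * v 0 - (w - y) * v 1) ≤ 0) :
    IsSymNash !![x,y;z,w] v := by
  refine ⟨⟨fun i => ?_, ?_⟩, fun t => ?_⟩
  · fin_cases i <;> simpa
  · simp [Fin.sum_univ_two, hs]
  · fin_cases t <;>
      simp only [Fin.sum_univ_two, Matrix.cons_val_zero, Matrix.cons_val_one, Matrix.head_cons,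
        Matrix.cons_val', Matrix.of_apply, Matrix.empty_val', Matrix.cons_val_fin_one,
        Matrix.head_fin_const, Fin.mk_zero, Fin.mk_one, Fin.isValue]
    · have h2 : (v 0 + v 1 - 1) * (x * v 0 + y * v 1) = 0 := by
        rw [show v 0 + v 1 - 1 = 0 by linarith]; ring
      nlinarith [hc2, h2]
    · have h2 : (v 0 + v 1 - 1) * (z * v 0 + w * v 1) = 0 := by
        rw [show v 0 + v 1 - 1 = 0 by linarith]; ring
      nlinarith [hc1, h2]

lemma nash_to_S (A : Matrix (Fin 2) (Fin 2) ℝ) (v : Fin 2 → ℝ)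
    (W : Matrix (Fin 2) (Fin 2) ℝ) (hN : IsSymNash A v) (hW : ∀ a b, W a b = v a * v b) :
    IsCorrEq A W ∧ IsCondIID W := by
  obtain ⟨⟨hv0, hv1⟩, hnash⟩ := hN
  rw [Fin.sum_univ_two] at hv1
  have h0 := hnash 0
  have h1 := hnash 1
  simp only [Fin.sum_univ_two] at h0 h1
  constructor
  · refine ⟨fun a b => by rw [hW]; exact mul_nonneg (hv0 a) (hv0 b), ?_, ?_, ?_⟩
    · simp only [Fin.sum_univ_two, hW]; nlinarith [hv1]
    · intro s t
      have key : ∀ P : ℝ, (v 0 + v 1 - 1) * P = 0 := fun P => by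
        rw [show v 0 + v 1 - 1 = 0 by linarith]; ring
      fin_cases s <;> fin_cases t <;>
        simp only [Fin.sum_univ_two, hW, Fin.mk_zero, Fin.mk_one, Fin.isValue] <;>
        nlinarith [h0, h1, key (A 1 0 * v 0 + A 1 1 * v 1), key (A 0 0 * v 0 + A 0 1 * v 1)]
    · intro s t
      have key : ∀ P : ℝ, (v 0 + v 1 - 1) * P = 0 := fun P => by
        rw [show v 0 + v 1 - 1 = 0 by linarith]; ring
      fin_cases s <;> fin_cases t <;>
        simp only [Fin.sum_univ_two, hW, Fin.mk_zero, Fin.mk_one, Fin.isValue] <;>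
        nlinarith [h0, h1, key (A 1 0 * v 0 + A 1 1 * v 1), key (A 0 0 * v 0 + A 0 1 * v 1)]
  · exact ⟨1, ![1], ![v], by simp, by simp, by
      intro i; fin_cases i; exact ⟨hv0, by rw [Fin.sum_univ_two]; exact hv1⟩, by
      intro a b; simp [hW]⟩

lemma S_convex {m : ℕ} (A : Matrix (Fin m) (Fin m) ℝ) :
    Convex ℝ {W : Matrix (Fin m) (Fin m) ℝ | IsCorrEq A W ∧ IsCondIID W} := by
  rintro P ⟨⟨hP0, hP1, hP2, hP3⟩, kP, lP, wP, hlP0, hlP1, hwP, hfP⟩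
    Q ⟨⟨hQ0, hQ1, hQ2, hQ3⟩, kQ, lQ, wQ, hlQ0, hlQ1, hwQ, hfQ⟩ a b ha hb hab
  have hval : ∀ s t, (a • P + b • Q) s t = a * P s t + b * Q s t := by
    intro s t; simp [Matrix.add_apply, Matrix.smul_apply, smul_eq_mul]
  constructor
  · refine ⟨fun s t => ?_, ?_, ?_, ?_⟩
    · rw [hval]; exact add_nonneg (mul_nonneg ha (hP0 s t)) (mul_nonneg hb (hQ0 s t))
    · simp only [hval, Finset.sum_add_distrib, ← Finset.mul_sum]
      rw [hP1, hQ1]; linarith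
    · intro s t
      have e1 := mul_le_mul_of_nonneg_left (hP2 s t) ha
      have e2 := mul_le_mul_of_nonneg_left (hQ2 s t) hb
      rw [Finset.mul_sum] at e1 e2
      simp only [hval, mul_add]
      rw [Finset.sum_add_distrib]
      calc (∑ j, (A t j - A s j) * (a * P s j)) + ∑ j, (A t j - A s j) * (b * Q s j)
          = (∑ j, a * ((A t j - A s j) * P s j)) + ∑ j, b * ((A t j - A s j) * Q s j) := by
            congr 1 <;> exact Finset.sum_congr rfl (fun i _ => by ring)
        _ ≤ 0 := by linarith
    · intro s t
      have e1 := mul_le_mul_of_nonneg_left (hP3 s t) ha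
      have e2 := mul_le_mul_of_nonneg_left (hQ3 s t) hb
      rw [Finset.mul_sum] at e1 e2
      simp only [hval, mul_add]
      rw [Finset.sum_add_distrib]
      calc (∑ i, (A t i - A s i) * (a * P i s)) + ∑ i, (A t i - A s i) * (b * Q i s)
          = (∑ i, a * ((A t i - A s i) * P i s)) + ∑ i, b * ((A t i - A s i) * Q i s) := by
            congr 1 <;> exact Finset.sum_congr rfl (fun i _ => by ring)
        _ ≤ 0 := by linarith
  · refine ⟨kP + kQ, Fin.append (fun i => a * lP i) (fun i => b * lQ i), Fin.append wP wQ,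
      ?_, ?_, ?_, ?_⟩
    · intro i
      refine Fin.addCases (fun j => ?_) (fun j => ?_) i <;>
        simp only [Fin.append_left, Fin.append_right]
      · exact mul_nonneg ha (hlP0 j)
      · exact mul_nonneg hb (hlQ0 j)
    · rw [Fin.sum_univ_add]
      simp only [Fin.append_left, Fin.append_right, ← Finset.mul_sum, hlP1, hlQ1]
      linarith
    · intro i
      refine Fin.addCases (fun j => ?_) (fun j => ?_) i <;>
        simp only [Fin.append_left, Fin.append_right]
      · exact hwP j
      · exact hwQ j
    · intro s t
      rw [hval, Fin.sum_univ_add]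
      simp only [Fin.append_left, Fin.append_right, hfP, hfQ, Finset.mul_sum]
      congr 1 <;> exact Finset.sum_congr rfl (fun i _ => by ring)

lemma mem3 {s : Set (Matrix (Fin 2) (Fin 2) ℝ)} {x0 x1 x2 W : Matrix (Fin 2) (Fin 2) ℝ}
    (h0 : x0 ∈ s) (h1 : x1 ∈ s) (h2 : x2 ∈ s) {a0 a1 a2 : ℝ}
    (ha0 : 0 ≤ a0) (ha1 : 0 ≤ a1) (ha2 : 0 ≤ a2) (hsum : a0 + a1 + a2 = 1)
    (hW : W = a0 • x0 + a1 • x1 + a2 • x2) : W ∈ convexHull ℝ s := by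
  have hws : ∑ i : Fin 3, (![a0, a1, a2]) i = 1 := by simp [Fin.sum_univ_three, hsum]
  have hmem := Finset.centerMass_mem_convexHull (Finset.univ : Finset (Fin 3))
    (w := ![a0, a1, a2]) (z := ![x0, x1, x2])
    (fun i _ => by fin_cases i <;> simpa) (by rw [hws]; norm_num)
    (fun i _ => by fin_cases i <;> simpa)
  rw [Finset.centerMass_eq_of_sum_1 _ _ hws, Fin.sum_univ_three] at hmem
  simpa [hW] using hmem

lemma psd_of_condIID (W : Matrix (Fin 2) (Fin 2) ℝ) (h : IsCondIID W) :
    W 1 0 = W 0 1 ∧ W 0 1 ^ 2 ≤ W 0 0 * W 1 1 := by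
  obtain ⟨k, lam, wv, hl0, _, _, hf⟩ := h
  constructor
  · rw [hf, hf]; exact Finset.sum_congr rfl (fun i _ => by ring)
  · have key := Finset.sum_mul_sq_le_sq_mul_sq Finset.univ
      (fun i => Real.sqrt (lam i) * wv i 0) (fun i => Real.sqrt (lam i) * wv i 1)
    have e0 : ∀ i : Fin k, (Real.sqrt (lam i) * wv i 0) ^ 2 = lam i * (wv i 0 * wv i 0) := by
      intro i; rw [mul_pow, Real.sq_sqrt (hl0 i)]; ring
    have e1 : ∀ i : Fin k, (Real.sqrt (lam i) * wv i 1) ^ 2 = lam i * (wv i 1 * wv i 1) := by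
      intro i; rw [mul_pow, Real.sq_sqrt (hl0 i)]; ring
    have e01 : ∀ i : Fin k,
        (Real.sqrt (lam i) * wv i 0) * (Real.sqrt (lam i) * wv i 1)
          = lam i * (wv i 0 * wv i 1) := by
      intro i
      have h : Real.sqrt (lam i) * Real.sqrt (lam i) = lam i := Real.mul_self_sqrt (hl0 i)
      calc (Real.sqrt (lam i) * wv i 0) * (Real.sqrt (lam i) * wv i 1)
          = (Real.sqrt (lam i) * Real.sqrt (lam i)) * (wv i 0 * wv i 1) := by ring
        _ = lam i * (wv i 0 * wv i 1) := by rw [h]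
    rw [Finset.sum_congr rfl (fun i _ => e01 i), Finset.sum_congr rfl (fun i _ => e0 i),
      Finset.sum_congr rfl (fun i _ => e1 i)] at key
    rw [hf, hf, hf]
    exact key

set_option maxHeartbeats 2000000 in
lemma S_to_hull (x y z w : ℝ) (W : Matrix (Fin 2) (Fin 2) ℝ)
    (hC : IsCorrEq !![x,y;z,w] W) (hI : IsCondIID W) :
    W ∈ convexHull ℝ {W : Matrix (Fin 2) (Fin 2) ℝ |
      ∃ v : Fin 2 → ℝ, IsSymNash !![x,y;z,w] v ∧ ∀ a b, W a b = v a * v b} := by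
  obtain ⟨hnn, hsum, hrowC, hcolC⟩ := hC
  obtain ⟨hsym, hpsd0⟩ := psd_of_condIID W hI
  obtain ⟨p, q, r, hW00, hW01, hW10, hW11⟩ :
      ∃ p q r, W 0 0 = p ∧ W 0 1 = q ∧ W 1 0 = q ∧ W 1 1 = r := ⟨_, _, _, rfl, rfl, hsym, rfl⟩
  have hp0 : 0 ≤ p := hW00 ▸ hnn 0 0
  have hq0 : 0 ≤ q := hW01 ▸ hnn 0 1
  have hr0 : 0 ≤ r := hW11 ▸ hnn 1 1
  have hpsd : q ^ 2 ≤ p * r := by rw [hW01, hW00, hW11] at hpsd0; exact hpsd0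
  have hsum2 : p + q + (q + r) = 1 := by
    have := hsum
    simp only [Fin.sum_univ_two, hW00, hW01, hW10, hW11] at this
    linarith
  have hrow : (z - x) * p + (w - y) * q ≤ 0 := by
    have := hrowC 0 1
    simp only [Fin.sum_univ_two, Matrix.cons_val_zero, Matrix.cons_val_one, Matrix.head_cons,
      Matrix.cons_val', Matrix.of_apply, Matrix.empty_val', Matrix.cons_val_fin_one,
      Matrix.head_fin_const, hW00, hW01] at this
    linarith
  have hrow2 : (x - z) * q + (y - w) * r ≤ 0 := by
    have := hrowC 1 0
    simp only [Fin.sum_univ_two, Matrix.cons_val_zero, Matrix.cons_val_one, Matrix.head_cons,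
      Matrix.cons_val', Matrix.of_apply, Matrix.empty_val', Matrix.cons_val_fin_one,
      Matrix.head_fin_const, hW10, hW11] at this
    linarith
  by_cases hq' : q = 0
  · -- q = 0 : diagonal case
    by_cases hp' : p = 0
    · -- W = E11
      apply subset_convexHull
      refine ⟨![0,1], nash_mk x y z w _ (by norm_num) (by norm_num) (by norm_num)
        (by norm_num) ?_, ?_⟩
      · have hr1 : r = 1 := by linarith
        have e1 : (x - z) * q = 0 := by rw [hq']; ring
        have e2 : (y - w) * r = y - w := by rw [hr1]; ring
        simp only [Matrix.cons_val_zero, Matrix.cons_val_one, Matrix.head_cons]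
        nlinarith [hrow2, e1, e2]
      · intro a b
        have hr1 : r = 1 := by linarith
        fin_cases a <;> fin_cases b <;>
          simp [hW00, hW01, hW10, hW11, hp', hq', hr1]
    · -- p > 0
      have hppos : 0 < p := lt_of_le_of_ne hp0 (Ne.symm hp')
      have hbnn : 0 ≤ x - z := by
        by_contra hcon
        push_neg at hcon
        have e : (w - y) * q = 0 := by rw [hq']; ring
        nlinarith [hrow, e, mul_pos (by linarith : (0:ℝ) < z - x) hppos]
      by_cases hr' : r = 0
      · -- W = E00
        apply subset_convexHull
        refine ⟨![1,0], nash_mk x y z w _ (by norm_num) (by norm_num) (by norm_num)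
          (by simpa using hbnn) (by norm_num), ?_⟩
        intro a b
        have hp1 : p = 1 := by linarith
        fin_cases a <;> fin_cases b <;>
          simp [hW00, hW01, hW10, hW11, hp1, hq', hr']
      · have hrpos : 0 < r := lt_of_le_of_ne hr0 (Ne.symm hr')
        have hcnn : 0 ≤ w - y := by
          by_contra hcon
          push_neg at hcon
          have e : (x - z) * q = 0 := by rw [hq']; ring
          nlinarith [hrow2, e, mul_pos (by linarith : (0:ℝ) < y - w) hrpos]
        refine mem3 (s := _) (x0 := Matrix.of fun a b => (![(1:ℝ),0]) a * (![(1:ℝ),0]) b)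
          (x1 := Matrix.of fun a b => (![(0:ℝ),1]) a * (![(0:ℝ),1]) b)
          (x2 := Matrix.of fun a b => (![(1:ℝ),0]) a * (![(1:ℝ),0]) b)
          ?_ ?_ ?_ (a0 := p) (a1 := r) (a2 := 0) hp0 hr0 le_rfl (by linarith) ?_
        · exact ⟨![1,0], nash_mk x y z w _ (by norm_num) (by norm_num) (by norm_num)
            (by simpa using hbnn) (by norm_num), fun a b => rfl⟩
        · exact ⟨![0,1], nash_mk x y z w _ (by norm_num) (by norm_num) (by norm_num)
            (by norm_num) (by simpa using hcnn), fun a b => rfl⟩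
        · exact ⟨![1,0], nash_mk x y z w _ (by norm_num) (by norm_num) (by norm_num)
            (by simpa using hbnn) (by norm_num), fun a b => rfl⟩
        · ext a b
          simp only [Matrix.add_apply, Matrix.smul_apply, Matrix.of_apply, smul_eq_mul]
          fin_cases a <;> fin_cases b <;>
            simp only [Fin.mk_zero, Fin.mk_one, Fin.isValue, hW00, hW01, hW10, hW11,
              Matrix.cons_val_zero, Matrix.cons_val_one, Matrix.head_cons] <;>
            (try rw [hq']) <;> ring
  · -- q > 0
    have hqpos : 0 < q := lt_of_le_of_ne hq0 (Ne.symm hq')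
    by_cases hbc : 0 < x - z ∧ 0 < w - y
    · obtain ⟨hb, hc⟩ := hbc
      clear hI hnn hsum hrowC hcolC hsym hpsd0 hpsd
      have hbcpos : 0 < (x - z) + (w - y) := by linarith
      have hbne : x - z ≠ 0 := ne_of_gt hb
      have hcne : w - y ≠ 0 := ne_of_gt hc
      have hbcne : (x - z) + (w - y) ≠ 0 := ne_of_gt hbcpos
      obtain ⟨v0, v1, a0, a1, a2, hv0d, hv1d, ha0d, ha1d, ha2d⟩ :
          ∃ v0 v1 a0 a1 a2 : ℝ,
            v0 = (w - y) / ((x - z) + (w - y)) ∧ v1 = (x - z) / ((x - z) + (w - y)) ∧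
            a0 = (p * (x - z) - q * (w - y)) / (x - z) ∧
            a1 = (r * (w - y) - q * (x - z)) / (w - y) ∧
            a2 = q * ((x - z) + (w - y))^2 / ((x - z) * (w - y)) :=
        ⟨_, _, _, _, _, rfl, rfl, rfl, rfl, rfl⟩
      have hv0n : 0 ≤ v0 := by rw [hv0d]; exact div_nonneg (le_of_lt hc) (le_of_lt hbcpos)
      have hv1n : 0 ≤ v1 := by rw [hv1d]; exact div_nonneg (le_of_lt hb) (le_of_lt hbcpos)
      have hvs : v0 + v1 = 1 := by rw [hv0d, hv1d]; field_simp; ring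
      have hveq : (x - z) * v0 - (w - y) * v1 = 0 := by rw [hv0d, hv1d]; field_simp; ring
      have ha0n : 0 ≤ a0 := by rw [ha0d]; exact div_nonneg (by nlinarith [hrow]) (le_of_lt hb)
      have ha1n : 0 ≤ a1 := by rw [ha1d]; exact div_nonneg (by nlinarith [hrow2]) (le_of_lt hc)
      have ha2n : 0 ≤ a2 := by rw [ha2d]; exact div_nonneg (by positivity) (by positivity)
      have hasum : a0 + a1 + a2 = 1 := by
        rw [ha0d, ha1d, ha2d]
        have hkey : (p * (x - z) - q * (w - y)) / (x - z)
            + (r * (w - y) - q * (x - z)) / (w - y)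
            + q * ((x - z) + (w - y))^2 / ((x - z) * (w - y)) = p + q + (q + r) := by
          field_simp
          ring
        rw [hkey]; exact hsum2
      have hWd : W = a0 • (Matrix.of fun a b => (![(1:ℝ),0]) a * (![(1:ℝ),0]) b)
          + a1 • (Matrix.of fun a b => (![(0:ℝ),1]) a * (![(0:ℝ),1]) b)
          + a2 • (Matrix.of fun a b => (![v0,v1]) a * (![v0,v1]) b) := by
        ext a b
        simp only [Matrix.add_apply, Matrix.smul_apply, Matrix.of_apply, smul_eq_mul]
        fin_cases a <;> fin_cases b <;>
          simp only [Fin.mk_zero, Fin.mk_one, Fin.isValue, hW00, hW01, hW10, hW11,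
            Matrix.cons_val_zero, Matrix.cons_val_one, Matrix.head_cons] <;>
          simp only [ha0d, ha1d, ha2d, hv0d, hv1d] <;> field_simp <;>
            (first
              | (left; (first | ring | trivial))
              | ring)
      refine mem3 ?_ ?_ ?_ ha0n ha1n ha2n hasum hWd
      · exact ⟨![1,0], nash_mk x y z w _ (by norm_num) (by norm_num) (by norm_num)
          (by simp; linarith) (by norm_num), fun a b => rfl⟩
      · exact ⟨![0,1], nash_mk x y z w _ (by norm_num) (by norm_num) (by norm_num)
          (by norm_num) (by simp; linarith), fun a b => rfl⟩
      · refine ⟨![v0, v1], nash_mk x y z w _ (by simpa using hv0n) (by simpa using hv1n)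
          (by simpa using hvs) ?_ ?_, fun a b => rfl⟩
        · simp only [Matrix.cons_val_zero, Matrix.cons_val_one, Matrix.head_cons]
          rw [hveq]; simp
        · simp only [Matrix.cons_val_zero, Matrix.cons_val_one, Matrix.head_cons]
          rw [hveq]; simp
    · -- not both positive
      have hble : x - z ≤ 0 := by
        by_contra hbpos
        push_neg at hbpos
        have hcle : w - y ≤ 0 := by
          by_contra hcpos; push_neg at hcpos; exact hbc ⟨hbpos, hcpos⟩
        nlinarith [hrow2]
      have hcle : w - y ≤ 0 := by
        by_contra hcpos
        push_neg at hcpos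
        nlinarith [hrow]
      by_cases hbz : x - z = 0 ∧ w - y = 0
      · -- b = c = 0 : every probability vector is Nash; use the cond-iid decomposition
        obtain ⟨k, lam, wv, hl0, hl1, hw, hf⟩ := hI
        have hmemN : ∀ i : Fin k, (Matrix.of fun a b => wv i a * wv i b) ∈
            {W : Matrix (Fin 2) (Fin 2) ℝ |
              ∃ v : Fin 2 → ℝ, IsSymNash !![x,y;z,w] v ∧ ∀ a b, W a b = v a * v b} := by
          intro i
          obtain ⟨hwn, hws⟩ := hw i
          rw [Fin.sum_univ_two] at hws
          exact ⟨wv i, nash_mk x y z w _ (hwn 0) (hwn 1) hws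
            (by rw [hbz.1, hbz.2]; simp) (by rw [hbz.1, hbz.2]; simp), fun a b => rfl⟩
        have hmem := Finset.centerMass_mem_convexHull (Finset.univ : Finset (Fin k))
          (w := lam) (z := fun i => Matrix.of fun a b => wv i a * wv i b)
          (fun i _ => hl0 i) (by rw [hl1]; norm_num)
          (fun i _ => hmemN i)
        rw [Finset.centerMass_eq_of_sum_1 _ _ hl1] at hmem
        have hWeq : W = ∑ i : Fin k, lam i • (Matrix.of fun a b => wv i a * wv i b) := by
          ext s t
          rw [hf]
          simp [Matrix.sum_apply, Matrix.smul_apply, smul_eq_mul]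
        rw [hWeq]
        exact hmem
      · -- rank one case: p r = q²
        have hb1 : 0 ≤ (x - z) * (p * r - q * q) := by
          nlinarith [mul_le_mul_of_nonneg_right hrow hr0,
            mul_le_mul_of_nonneg_right hrow2 hq0]
        have hc1 : 0 ≤ (w - y) * (p * r - q * q) := by
          nlinarith [mul_le_mul_of_nonneg_right hrow hq0,
            mul_le_mul_of_nonneg_right hrow2 hp0]
        have hneg : x - z < 0 ∨ w - y < 0 := by
          rcases lt_or_eq_of_le hble with h | h
          · exact Or.inl h
          · rcases lt_or_eq_of_le hcle with h' | h'
            · exact Or.inr h'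
            · exact absurd ⟨h, h'⟩ hbz
        have hprq : p * r = q * q := by
          rcases hneg with h | h
          · nlinarith [hpsd, hb1]
          · nlinarith [hpsd, hc1]
        have hP : (p + q)^2 = p := by nlinarith [hsum2, hprq]
        have hQ : (p + q) * (q + r) = q := by nlinarith [hsum2, hprq]
        have hR : (q + r)^2 = r := by nlinarith [hsum2, hprq]
        apply subset_convexHull
        refine ⟨![p + q, q + r], nash_mk x y z w _ (by simp; linarith) (by simp; linarith)
          (by simp; linarith) ?_ ?_, ?_⟩
        · simp only [Matrix.cons_val_zero, Matrix.cons_val_one, Matrix.head_cons]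
          nlinarith [hrow, hP, hQ]
        · simp only [Matrix.cons_val_zero, Matrix.cons_val_one, Matrix.head_cons]
          nlinarith [hrow2, hQ, hR]
        · intro a b
          fin_cases a <;> fin_cases b <;>
            simp only [hW00, hW01, hW10, hW11, Matrix.cons_val_zero, Matrix.cons_val_one,
              Matrix.head_cons, Fin.mk_zero, Fin.mk_one, Fin.isValue] <;> nlinarith [hP, hQ, hR]

theorem stmt9 (x y z w : ℝ) (A : Matrix (Fin 2) (Fin 2) ℝ) (hA : A = !![x, y; z, w]) :
    (∀ W ∈ Set.extremePoints ℝ {W : Matrix (Fin 2) (Fin 2) ℝ | IsCorrEq A W ∧ IsCondIID W},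
      ∃ v : Fin 2 → ℝ, IsSymNash A v ∧ ∀ a b, W a b = v a * v b) ∧
    {W : Matrix (Fin 2) (Fin 2) ℝ | IsCorrEq A W ∧ IsCondIID W} =
      convexHull ℝ {W : Matrix (Fin 2) (Fin 2) ℝ |
        ∃ v : Fin 2 → ℝ, IsSymNash A v ∧ ∀ a b, W a b = v a * v b} := by
  subst hA
  have heq : {W : Matrix (Fin 2) (Fin 2) ℝ | IsCorrEq !![x, y; z, w] W ∧ IsCondIID W} =
      convexHull ℝ {W : Matrix (Fin 2) (Fin 2) ℝ |
        ∃ v : Fin 2 → ℝ, IsSymNash !![x, y; z, w] v ∧ ∀ a b, W a b = v a * v b} := by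
    apply le_antisymm
    · intro W hW
      exact S_to_hull x y z w W hW.1 hW.2
    · apply convexHull_min
      · rintro W ⟨v, hNash, hW⟩
        exact nash_to_S _ v W hNash hW
      · exact S_convex _
  refine ⟨?_, heq⟩
  intro W hW
  rw [heq] at hW
  have h2 : W ∈ {W : Matrix (Fin 2) (Fin 2) ℝ |
      ∃ v : Fin 2 → ℝ, IsSymNash !![x, y; z, w] v ∧ ∀ a b, W a b = v a * v b} :=
    extremePoints_convexHull_subset hW
  exact h2
end

section
/- Let Γ be a symmetric bimatrix game with m strategies and row payoff matrix A. Every convex combination of symmetric Nash equilibria (viewed as matrices v vᵀ) is an exchangeable equilibrium, and every exchangeable equilibrium is a symmetric correlated equilibrium. That is, conv(Nash_sym) ⊆ XE_sym ⊆ CE_sym. -/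
open Finset

lemma nash_compl {m : ℕ} (A : Matrix (Fin m) (Fin m) ℝ) (v : Fin m → ℝ)
    (hv : IsSymNash A v) {s : Fin m} (hs : 0 < v s) :
    (∑ i, ∑ j, v i * A i j * v j) = ∑ j, A s j * v j := by
  set V := ∑ i, ∑ j, v i * A i j * v j with hV
  have hVsum : V = ∑ i, v i * ∑ j, A i j * v j := by
    rw [hV]; apply Finset.sum_congr rfl; intro i _
    rw [Finset.mul_sum]; apply Finset.sum_congr rfl; intro j _; ring
  by_contra h
  have hlt : ∑ j, A s j * v j < V := lt_of_le_of_ne (hv.2 s) (fun e => h e.symm)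
  have : ∑ i, v i * ∑ j, A i j * v j < ∑ i, v i * V := by
    apply Finset.sum_lt_sum
    · intro i _; exact mul_le_mul_of_nonneg_left (hv.2 i) (hv.1.1 i)
    · exact ⟨s, Finset.mem_univ s, by exact mul_lt_mul_of_pos_left hlt hs⟩
  rw [← hVsum, ← Finset.sum_mul, hv.1.2, one_mul] at this
  exact lt_irrefl _ this

lemma nash_corrEq {m : ℕ} (A : Matrix (Fin m) (Fin m) ℝ) (v : Fin m → ℝ)
    (hv : IsSymNash A v) (W : Matrix (Fin m) (Fin m) ℝ)
    (hW : ∀ a b, W a b = v a * v b) : IsCorrEq A W := by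
  have key : ∀ s t : Fin m, v s * (∑ j, A t j * v j - ∑ j, A s j * v j) ≤ 0 := by
    intro s t
    rcases (hv.1.1 s).lt_or_eq with hs | hs
    · apply mul_nonpos_of_nonneg_of_nonpos hs.le
      rw [sub_nonpos, ← nash_compl A v hv hs]
      exact hv.2 t
    · rw [← hs, zero_mul]
  refine ⟨fun a b => ?_, ?_, fun s t => ?_, fun s t => ?_⟩
  · rw [hW]; exact mul_nonneg (hv.1.1 a) (hv.1.1 b)
  · have : ∀ a, ∑ b, W a b = v a := by
      intro a
      simp only [hW a, ← Finset.mul_sum, hv.1.2, mul_one]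
    simp only [this, hv.1.2]
  · calc ∑ j, (A t j - A s j) * W s j
        = v s * (∑ j, A t j * v j - ∑ j, A s j * v j) := by
          rw [← Finset.sum_sub_distrib, Finset.mul_sum]
          apply Finset.sum_congr rfl; intro j _; rw [hW]; ring
      _ ≤ 0 := key s t
  · calc ∑ i, (A t i - A s i) * W i s
        = v s * (∑ j, A t j * v j - ∑ j, A s j * v j) := by
          rw [← Finset.sum_sub_distrib, Finset.mul_sum]
          apply Finset.sum_congr rfl; intro j _; rw [hW]; ring
      _ ≤ 0 := key s t

lemma corrEq_convex {m : ℕ} (A : Matrix (Fin m) (Fin m) ℝ) :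
    Convex ℝ {W : Matrix (Fin m) (Fin m) ℝ | IsCorrEq A W} := by
  intro P hP Q hQ a b ha hb hab
  have hap : ∀ x y, (a • P + b • Q) x y = a * P x y + b * Q x y := by
    intro x y; simp [Matrix.add_apply, Matrix.smul_apply, smul_eq_mul]
  refine ⟨fun x y => ?_, ?_, fun s t => ?_, fun s t => ?_⟩
  · rw [hap]; exact add_nonneg (mul_nonneg ha (hP.1 x y)) (mul_nonneg hb (hQ.1 x y))
  · simp only [hap, Finset.sum_add_distrib, ← Finset.mul_sum, hP.2.1, hQ.2.1]
    linarith
  · have : ∑ j, (A t j - A s j) * (a • P + b • Q) s j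
        = a * (∑ j, (A t j - A s j) * P s j) + b * (∑ j, (A t j - A s j) * Q s j) := by
      rw [Finset.mul_sum, Finset.mul_sum, ← Finset.sum_add_distrib]
      apply Finset.sum_congr rfl; intro j _; rw [hap]; ring
    rw [this]
    have := hP.2.2.1 s t; have := hQ.2.2.1 s t; nlinarith
  · have : ∑ i, (A t i - A s i) * (a • P + b • Q) i s
        = a * (∑ i, (A t i - A s i) * P i s) + b * (∑ i, (A t i - A s i) * Q i s) := by
      rw [Finset.mul_sum, Finset.mul_sum, ← Finset.sum_add_distrib]
      apply Finset.sum_congr rfl; intro i _; rw [hap]; ring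
    rw [this]
    have := hP.2.2.2 s t; have := hQ.2.2.2 s t; nlinarith

lemma condIID_convex {m : ℕ} :
    Convex ℝ {W : Matrix (Fin m) (Fin m) ℝ | IsCondIID W} := by
  rintro P ⟨k1, l1, w1, hl1, hs1, hw1, hP⟩ Q ⟨k2, l2, w2, hl2, hs2, hw2, hQ⟩ a b ha hb hab
  refine ⟨k1 + k2, Fin.addCases (fun i => a * l1 i) (fun i => b * l2 i),
    Fin.addCases w1 w2, ?_, ?_, ?_, ?_⟩
  · intro i
    refine Fin.addCases (fun i => ?_) (fun i => ?_) i
    · simp only [Fin.addCases_left]; exact mul_nonneg ha (hl1 i)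
    · simp only [Fin.addCases_right]; exact mul_nonneg hb (hl2 i)
  · rw [Fin.sum_univ_add]
    simp only [Fin.addCases_left, Fin.addCases_right, ← Finset.mul_sum, hs1, hs2]
    linarith
  · intro i
    refine Fin.addCases (fun i => ?_) (fun i => ?_) i
    · simp only [Fin.addCases_left]; exact hw1 i
    · simp only [Fin.addCases_right]; exact hw2 i
  · intro x y
    rw [Fin.sum_univ_add]
    simp only [Fin.addCases_left, Fin.addCases_right]
    have : (a • P + b • Q) x y = a * P x y + b * Q x y := by
      simp [Matrix.add_apply, Matrix.smul_apply, smul_eq_mul]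
    rw [this, hP, hQ, Finset.mul_sum, Finset.mul_sum]
    congr 1 <;> (apply Finset.sum_congr rfl; intro i _; ring)

theorem stmt10 {m : ℕ} (A : Matrix (Fin m) (Fin m) ℝ) :
    convexHull ℝ {W : Matrix (Fin m) (Fin m) ℝ |
        ∃ v : Fin m → ℝ, IsSymNash A v ∧ ∀ a b, W a b = v a * v b} ⊆
      {W : Matrix (Fin m) (Fin m) ℝ | IsCorrEq A W ∧ IsCondIID W} ∧
    {W : Matrix (Fin m) (Fin m) ℝ | IsCorrEq A W ∧ IsCondIID W} ⊆
      {W : Matrix (Fin m) (Fin m) ℝ | IsCorrEq A W ∧ W.IsSymm} := by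
  constructor
  · apply convexHull_min
    · rintro W ⟨v, hv, hW⟩
      refine ⟨nash_corrEq A v hv W hW, 1, fun _ => 1, fun _ => v, fun _ => zero_le_one,
        by simp, fun _ => hv.1, fun x y => by simp [hW]⟩
    · exact Convex.inter (corrEq_convex A) condIID_convex
  · rintro W ⟨hce, k, lam, w, hl, hs, hw, hW⟩
    refine ⟨hce, ?_⟩
    ext x y
    simp only [Matrix.transpose_apply, hW]
    apply Finset.sum_congr rfl; intro i _; ring
end

section
/- Let Γ be a symmetric bimatrix game with row payoff matrix A. If (x, y) is a Nash equilibrium of Γ with x ≠ y, then W = (1/2)(x yᵀ + y xᵀ) is a symmetric correlated equilibrium of Γ that is not an exchangeable equilibrium. Hence if Γ has an asymmetric Nash equilibrium, then XE_sym(Γ) ⊊ CE_sym(Γ). -/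
/-- Nash equilibrium of the symmetric bimatrix game with row payoff `A`
(column payoff `Aᵀ`): each mixed strategy is a best response to the other. -/
def IsNash {m : ℕ} (A : Matrix (Fin m) (Fin m) ℝ) (x y : Fin m → ℝ) : Prop :=
  IsProbVec x ∧ IsProbVec y ∧
    (∀ x₂ : Fin m → ℝ, IsProbVec x₂ →
      ∑ i, ∑ j, x₂ i * A i j * y j ≤ ∑ i, ∑ j, x i * A i j * y j) ∧
    (∀ y₂ : Fin m → ℝ, IsProbVec y₂ →
      ∑ i, ∑ j, y₂ i * A i j * x j ≤ ∑ i, ∑ j, y i * A i j * x j)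

/-- Best-response support lemma. -/
lemma br_lemma {m : ℕ} (A : Matrix (Fin m) (Fin m) ℝ) (x y : Fin m → ℝ)
    (hx : IsProbVec x)
    (h : ∀ x₂ : Fin m → ℝ, IsProbVec x₂ →
      ∑ i, ∑ j, x₂ i * A i j * y j ≤ ∑ i, ∑ j, x i * A i j * y j) :
    ∀ s t : Fin m, 0 < x s → ∑ j, A t j * y j ≤ ∑ j, A s j * y j := by
  intro s t hs
  set g : Fin m → ℝ := fun i => ∑ j, A i j * y j with hg
  set V : ℝ := ∑ i, x i * g i with hV
  have hpay : ∀ x₂ : Fin m → ℝ, ∑ i, ∑ j, x₂ i * A i j * y j = ∑ i, x₂ i * g i := by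
    intro x₂
    refine Finset.sum_congr rfl fun i _ => ?_
    rw [hg, Finset.mul_sum]
    exact Finset.sum_congr rfl fun j _ => by ring
  have hVle : ∀ t : Fin m, g t ≤ V := by
    intro t
    have hprob : IsProbVec (fun i => if i = t then (1:ℝ) else 0) :=
      ⟨fun i => by positivity, by simp⟩
    have := h _ hprob
    rw [hpay, hpay] at this
    simpa [Finset.sum_ite_eq', ← hV] using this
  have hzero : ∑ i, x i * (V - g i) = 0 := by
    have : ∑ i, x i * (V - g i) = (∑ i, x i) * V - ∑ i, x i * g i := by
      rw [Finset.sum_mul, ← Finset.sum_sub_distrib]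
      exact Finset.sum_congr rfl fun i _ => by ring
    rw [this, hx.2, one_mul, ← hV, sub_self]
  have hterm : x s * (V - g s) = 0 := by
    have := (Finset.sum_eq_zero_iff_of_nonneg
      (fun i _ => mul_nonneg (hx.1 i) (sub_nonneg.2 (hVle i)))).1 hzero s (Finset.mem_univ s)
    exact this
  have hgs : g s = V := by
    rcases mul_eq_zero.1 hterm with h1 | h1
    · exact absurd h1 (ne_of_gt hs)
    · linarith [sub_eq_zero.1 h1]
  calc g t ≤ V := hVle t
    _ = g s := hgs.symm

theorem stmt11 {m : ℕ} (A : Matrix (Fin m) (Fin m) ℝ) (x y : Fin m → ℝ)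
    (hnash : IsNash A x y) (hne : x ≠ y)
    (W : Matrix (Fin m) (Fin m) ℝ)
    (hW : ∀ a b, W a b = (x a * y b + y a * x b) / 2) :
    (IsCorrEq A W ∧ W.IsSymm ∧ ¬ IsCondIID W) ∧
      {P : Matrix (Fin m) (Fin m) ℝ | IsCorrEq A P ∧ IsCondIID P} ⊂
        {P : Matrix (Fin m) (Fin m) ℝ | IsCorrEq A P ∧ P.IsSymm} := by
  obtain ⟨hx, hy, hbrx, hbry⟩ := hnash
  -- best response facts
  have brx : ∀ s t : Fin m, 0 < x s → ∑ j, A t j * y j ≤ ∑ j, A s j * y j :=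
    br_lemma A x y hx hbrx
  have bry : ∀ s t : Fin m, 0 < y s → ∑ j, A t j * x j ≤ ∑ j, A s j * x j :=
    br_lemma A y x hy hbry
  -- sign helper
  have hsign : ∀ (z w : Fin m → ℝ), (∀ i, 0 ≤ z i) →
      (∀ s t : Fin m, 0 < z s → ∑ j, A t j * w j ≤ ∑ j, A s j * w j) →
      ∀ s t : Fin m, z s * (∑ j, (A t j - A s j) * w j) ≤ 0 := by
    intro z w hz hbr s t
    rcases (hz s).lt_or_eq with hlt | heq
    · have h1 : ∑ j, (A t j - A s j) * w j = (∑ j, A t j * w j) - ∑ j, A s j * w j := by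
        rw [← Finset.sum_sub_distrib]; exact Finset.sum_congr rfl fun j _ => by ring
      rw [h1]
      exact mul_nonpos_of_nonneg_of_nonpos (le_of_lt hlt) (sub_nonpos.2 (hbr s t hlt))
    · rw [← heq, zero_mul]
  -- W is a correlated equilibrium
  have hCE : IsCorrEq A W := by
    refine ⟨?_, ?_, ?_, ?_⟩
    · intro a b; rw [hW]
      have := mul_nonneg (hx.1 a) (hy.1 b)
      have := mul_nonneg (hy.1 a) (hx.1 b)
      linarith
    · have : ∑ a, ∑ b, W a b = (∑ a, x a) * (∑ b, y b) / 2 + (∑ a, y a) * (∑ b, x b) / 2 := by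
        rw [Finset.sum_mul, Finset.sum_mul, Finset.sum_div, Finset.sum_div,
          ← Finset.sum_add_distrib]
        refine Finset.sum_congr rfl fun a _ => ?_
        rw [Finset.mul_sum, Finset.mul_sum, Finset.sum_div, Finset.sum_div,
          ← Finset.sum_add_distrib]
        refine Finset.sum_congr rfl fun b _ => ?_
        rw [hW]; ring
      rw [this, hx.2, hy.2]; norm_num
    · intro s t
      have h1 : ∑ j, (A t j - A s j) * W s j
          = x s * (∑ j, (A t j - A s j) * y j) / 2 + y s * (∑ j, (A t j - A s j) * x j) / 2 := by
        rw [Finset.mul_sum, Finset.mul_sum, Finset.sum_div, Finset.sum_div,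
          ← Finset.sum_add_distrib]
        refine Finset.sum_congr rfl fun j _ => ?_
        rw [hW]; ring
      rw [h1]
      have h2 := hsign x y hx.1 brx s t
      have h3 := hsign y x hy.1 bry s t
      linarith
    · intro s t
      have h1 : ∑ i, (A t i - A s i) * W i s
          = y s * (∑ i, (A t i - A s i) * x i) / 2 + x s * (∑ i, (A t i - A s i) * y i) / 2 := by
        rw [Finset.mul_sum, Finset.mul_sum, Finset.sum_div, Finset.sum_div,
          ← Finset.sum_add_distrib]
        refine Finset.sum_congr rfl fun i _ => ?_
        rw [hW]; ring
      rw [h1]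
      have h2 := hsign y x hy.1 bry s t
      have h3 := hsign x y hx.1 brx s t
      linarith
  -- W is symmetric
  have hSymm : W.IsSymm := by
    apply Matrix.IsSymm.ext
    intro i j
    rw [hW, hW]; ring
  -- W is not CondIID
  have hNot : ¬ IsCondIID W := by
    rintro ⟨k, lam, w, hlam, _, hw, hrep⟩
    -- 2x2 minor inequality from Cauchy-Schwarz
    have hminor : ∀ a b : Fin m, (W a b) ^ 2 ≤ W a a * W b b := by
      intro a b
      have hcs := Finset.sum_mul_sq_le_sq_mul_sq Finset.univ
        (fun i => Real.sqrt (lam i) * w i a) (fun i => Real.sqrt (lam i) * w i b)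
      have e1 : ∀ (c : Fin m), ∀ i : Fin k,
          (Real.sqrt (lam i) * w i c) ^ 2 = lam i * (w i c * w i c) := by
        intro c i
        rw [mul_pow, Real.sq_sqrt (hlam i)]; ring
      have e2 : ∀ i : Fin k, (Real.sqrt (lam i) * w i a) * (Real.sqrt (lam i) * w i b)
          = lam i * (w i a * w i b) := by
        intro i
        have : Real.sqrt (lam i) * Real.sqrt (lam i) = lam i := Real.mul_self_sqrt (hlam i)
        calc (Real.sqrt (lam i) * w i a) * (Real.sqrt (lam i) * w i b)
            = (Real.sqrt (lam i) * Real.sqrt (lam i)) * (w i a * w i b) := by ring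
          _ = lam i * (w i a * w i b) := by rw [this]
      calc (W a b) ^ 2 = (∑ i, (Real.sqrt (lam i) * w i a) * (Real.sqrt (lam i) * w i b)) ^ 2 := by
            rw [hrep]; congr 1; exact Finset.sum_congr rfl fun i _ => (e2 i).symm
        _ ≤ (∑ i, (Real.sqrt (lam i) * w i a) ^ 2) * ∑ i, (Real.sqrt (lam i) * w i b) ^ 2 := hcs
        _ = W a a * W b b := by
            rw [hrep, hrep]
            congr 1
            · exact Finset.sum_congr rfl fun i _ => e1 a i
            · exact Finset.sum_congr rfl fun i _ => e1 b i
    -- deduce x a * y b = x b * y a for all a b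
    have hprop : ∀ a b : Fin m, x a * y b = x b * y a := by
      intro a b
      have h1 := hminor a b
      rw [hW, hW, hW] at h1
      nlinarith [sq_nonneg (x a * y b - x b * y a)]
    -- hence x = y
    apply hne
    funext a
    have : ∑ b, x a * y b = ∑ b, x b * y a :=
      Finset.sum_congr rfl fun b _ => hprop a b
    rw [← Finset.mul_sum, ← Finset.sum_mul, hy.2, hx.2, mul_one, one_mul] at this
    exact this
  refine ⟨⟨hCE, hSymm, hNot⟩, ?_⟩
  constructor
  · rintro P ⟨hPce, k, lam, w, hlam, hlam1, hw, hrep⟩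
    refine ⟨hPce, ?_⟩
    apply Matrix.IsSymm.ext
    intro i j
    rw [hrep, hrep]
    exact Finset.sum_congr rfl fun a _ => by ring
  · intro hsub
    have := hsub ⟨hCE, hSymm⟩
    exact hNot this.2
end

section
/- For the symmetric game with payoff matrices A = B = [[2,2,0],[2,1,2],[0,2,2]], the matrix W² = (1/8)·[[1,1,0],[1,2,1],[0,1,1]] is not a convex combination of Nash equilibria of the game (where a Nash equilibrium (x,y) is identified with the matrix x yᵀ). -/
lemma nash_key (x y : Fin 3 → ℝ)
    (h : IsNash !![2, 2, 0; 2, 1, 2; 0, 2, 2] x y) :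
    x 1 * y 1 - 4 * (x 0 * y 2) ≤ 0 := by
  obtain ⟨⟨hx0, hx1⟩, ⟨hy0, hy1⟩, hbr1, hbr2⟩ := h
  have sumx : x 0 + x 1 + x 2 = 1 := by simpa [Fin.sum_univ_three] using hx1
  have sumy : y 0 + y 1 + y 2 = 1 := by simpa [Fin.sum_univ_three] using hy1
  rcases le_or_gt (x 1) 0 with hx | hx
  · have h1 : x 1 = 0 := le_antisymm hx (hx0 1)
    rw [h1, zero_mul]
    linarith [mul_nonneg (hx0 0) (hy0 2)]
  rcases le_or_gt (y 1) 0 with hy | hy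
  · have h1 : y 1 = 0 := le_antisymm hy (hy0 1)
    rw [h1, mul_zero]
    linarith [mul_nonneg (hx0 0) (hy0 2)]
  have d1 := hbr1 ![x 0 + x 1, 0, x 2]
    ⟨by intro i; fin_cases i <;> simp <;> linarith [hx0 0, hx0 1, hx0 2],
     by simp [Fin.sum_univ_three]; linarith⟩
  have d2 := hbr2 ![y 0, 0, y 1 + y 2]
    ⟨by intro i; fin_cases i <;> simp <;> linarith [hy0 0, hy0 1, hy0 2],
     by simp [Fin.sum_univ_three]; linarith⟩
  simp only [Fin.sum_univ_three, Matrix.cons_val_zero, Matrix.cons_val_one,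
    Matrix.head_cons, Matrix.cons_val_two, Matrix.tail_cons, Matrix.of_apply,
    Matrix.cons_val', Matrix.empty_val', Matrix.cons_val_fin_one, Matrix.head_fin_const] at d1 d2
  have hyy : y 1 ≤ 2 * y 2 := by nlinarith [d1, hx]
  have hxx : x 1 ≤ 2 * x 0 := by nlinarith [d2, hy]
  nlinarith [mul_le_mul hxx hyy (le_of_lt hy) (by linarith [hx0 0] : (0:ℝ) ≤ 2 * x 0)]

theorem stmt16 (A W₂ : Matrix (Fin 3) (Fin 3) ℝ)
    (hA : A = !![2, 2, 0; 2, 1, 2; 0, 2, 2])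
    (hW : W₂ = (1 / 8 : ℝ) • !![1, 1, 0; 1, 2, 1; 0, 1, 1]) :
    W₂ ∉ convexHull ℝ {M : Matrix (Fin 3) (Fin 3) ℝ |
      ∃ x y : Fin 3 → ℝ, IsNash A x y ∧ ∀ a b, M a b = x a * y b} := by
  subst hA
  intro hmem
  have hconv : Convex ℝ {M : Matrix (Fin 3) (Fin 3) ℝ | M 1 1 - 4 * M 0 2 ≤ 0} := by
    have : IsLinearMap ℝ (fun M : Matrix (Fin 3) (Fin 3) ℝ => M 1 1 - 4 * M 0 2) := by
      constructor <;> intros <;> simp [Matrix.add_apply, Matrix.smul_apply] <;> ring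
    exact convex_halfSpace_le this 0
  have hsub : {M : Matrix (Fin 3) (Fin 3) ℝ |
      ∃ x y : Fin 3 → ℝ, IsNash !![2, 2, 0; 2, 1, 2; 0, 2, 2] x y ∧ ∀ a b, M a b = x a * y b}
      ⊆ {M : Matrix (Fin 3) (Fin 3) ℝ | M 1 1 - 4 * M 0 2 ≤ 0} := by
    rintro M ⟨x, y, hn, hM⟩
    simp only [Set.mem_setOf_eq, hM]
    exact nash_key x y hn
  have := convexHull_min hsub hconv hmem
  rw [hW] at this
  norm_num [Matrix.smul_apply] at this
  norm_num [Matrix.cons_val_two, Matrix.vecHead, Matrix.vecTail] at this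
end

section
/- For the symmetric game with row payoff matrix A = [[0,1,1],[2,1,0],[1,0,1]], the matrix W² = (5/7)·u uᵀ + (2/7)·v vᵀ with u = (1/8, 7/8, 0)ᵀ and v = (1/8, 0, 7/8)ᵀ equals (1/64)·[[1,5,2],[5,35,0],[2,0,14]], is a correlated equilibrium of the game, and gives each player expected utility 17/16; in particular there is an exchangeable equilibrium with expected utility strictly greater than that of every symmetric Nash equilibrium (which is at most 1). -/
lemma aux18 (a b c : ℝ) (h0 : 0 ≤ a) (h1 : 0 ≤ b) (h2 : 0 ≤ c)
    (hs : a + b + c = 1)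
    (n0 : b + c ≤ 3*a*b + 2*a*c + b^2 + c^2)
    (n1 : 2*a + b ≤ 3*a*b + 2*a*c + b^2 + c^2)
    (n2 : a + c ≤ 3*a*b + 2*a*c + b^2 + c^2) :
    3*a*b + 2*a*c + b^2 + c^2 ≤ 1 := by
  set u : ℝ := 3*a*b + 2*a*c + b^2 + c^2 with hu
  have n0' : b + c ≤ 1 := by linarith
  have e1 : 0 ≤ b * (u - (2*a + b)) := mul_nonneg h1 (by linarith)
  have e2 : 0 ≤ c * (u - (a + c)) := mul_nonneg h2 (by linarith)
  have e0 : 0 ≤ a * (u - (b + c)) := mul_nonneg h0 (by linarith)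
  have esum : a * (u - (b + c)) + b * (u - (2*a + b)) + c * (u - (a + c)) = 0 := by
    have : a + b + c = 1 := hs
    linear_combination u * this
  have e1z : b * (u - (2*a + b)) = 0 := by linarith
  have e2z : c * (u - (a + c)) = 0 := by linarith
  rcases eq_or_lt_of_le h1 with hb | hb
  · -- b = 0
    nlinarith [sq_nonneg a]
  · -- b > 0 so u = 2a + b
    have hub : u = 2*a + b := by
      have := mul_eq_zero.1 e1z
      rcases this with h | h
      · exact absurd h.symm (ne_of_lt hb)
      · linarith
    rcases eq_or_lt_of_le h2 with hc | hc
    · -- c = 0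
      nlinarith [sq_nonneg a]
    · -- c > 0 so u = a + c
      have huc : u = a + c := by
        have := mul_eq_zero.1 e2z
        rcases this with h | h
        · exact absurd h.symm (ne_of_lt hc)
        · linarith
      linarith

set_option maxHeartbeats 1000000 in
theorem stmt18 (A W₂ : Matrix (Fin 3) (Fin 3) ℝ)
    (hA : A = !![0, 1, 1; 2, 1, 0; 1, 0, 1])
    (hW : ∀ a b, W₂ a b =
      (5 / 7) * (![1/8, 7/8, 0] a * ![1/8, 7/8, 0] b) +
        (2 / 7) * (![1/8, 0, 7/8] a * ![1/8, 0, 7/8] b)) :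
    W₂ = (1 / 64 : ℝ) • !![1, 5, 2; 5, 35, 0; 2, 0, 14] ∧
      IsCorrEq A W₂ ∧ IsCondIID W₂ ∧
      (∑ i, ∑ j, A i j * W₂ i j) = 17 / 16 ∧
      (∀ x : Fin 3 → ℝ, IsSymNash A x →
        ∑ i, ∑ j, x i * A i j * x j ≤ 1 ∧
          ∑ i, ∑ j, x i * A i j * x j < ∑ i, ∑ j, A i j * W₂ i j) := by
  have hval : (∑ i, ∑ j, A i j * W₂ i j) = 17 / 16 := by
    simp [Fin.sum_univ_three, hA, hW]; norm_num
  refine ⟨?_, ⟨?_, ?_, ?_, ?_⟩, ?_, hval, ?_⟩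
  · ext a b
    fin_cases a <;> fin_cases b <;> simp [hW] <;> norm_num
  · intro a b
    fin_cases a <;> fin_cases b <;> simp [hW] <;> norm_num
  · simp [Fin.sum_univ_three, hW]; norm_num
  · intro s t
    fin_cases s <;> fin_cases t <;> simp [Fin.sum_univ_three, hA, hW] <;> norm_num
  · intro s t
    fin_cases s <;> fin_cases t <;> simp [Fin.sum_univ_three, hA, hW] <;> norm_num
  · refine ⟨2, ![5/7, 2/7], ![![1/8, 7/8, 0], ![1/8, 0, 7/8]], ?_, ?_, ?_, ?_⟩
    · intro i; fin_cases i <;> norm_num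
    · simp [Fin.sum_univ_two]; norm_num
    · intro i
      fin_cases i <;>
        exact ⟨by intro j; fin_cases j <;> norm_num, by simp [Fin.sum_univ_three]; norm_num⟩
    · intro a b
      rw [hW, Fin.sum_univ_two]
      fin_cases a <;> fin_cases b <;> norm_num
  · intro x hx
    obtain ⟨⟨hpos, hsum⟩, hnash⟩ := hx
    rw [hval]
    have h0 := hpos 0; have h1 := hpos 1; have h2 := hpos 2
    have hn0 := hnash 0; have hn1 := hnash 1; have hn2 := hnash 2
    simp only [Fin.sum_univ_three, hA] at hn0 hn1 hn2 hsum ⊢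
    norm_num [Matrix.cons_val_two, Matrix.tail_cons, Matrix.head_cons] at hn0 hn1 hn2 ⊢
    have H := aux18 (x 0) (x 1) (x 2) h0 h1 h2 hsum (by linarith) (by linarith) (by linarith)
    constructor
    · linarith
    · linarith
end

section
/- For the symmetric game with row payoff matrix A = [[0,1,1],[2,1,0],[1,0,1]], the matrix W¹ = [[0,1/2,0],[1/2,0,0],[0,0,0]] is a symmetric correlated equilibrium giving each player expected utility 3/2, but it is not a convex combination of outer products of probability vectors (so it is not an exchangeable equilibrium). -/
theorem stmt19 (A W₁ : Matrix (Fin 3) (Fin 3) ℝ)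
    (hA : A = !![0, 1, 1; 2, 1, 0; 1, 0, 1])
    (hW : W₁ = !![0, 1/2, 0; 1/2, 0, 0; 0, 0, 0]) :
    IsCorrEq A W₁ ∧ W₁.IsSymm ∧ (∑ i, ∑ j, A i j * W₁ i j) = 3 / 2 ∧ ¬ IsCondIID W₁ := by
  subst hA hW
  refine ⟨⟨?_, ?_, ?_, ?_⟩, ?_, ?_, ?_⟩
  · intro a b; fin_cases a <;> fin_cases b <;> norm_num
  · simp [Fin.sum_univ_three, Matrix.vecHead, Matrix.vecTail]; norm_num
  · intro s t; fin_cases s <;> fin_cases t <;> simp [Fin.sum_univ_three, Matrix.vecHead, Matrix.vecTail] <;> norm_num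
  · intro s t; fin_cases s <;> fin_cases t <;> simp [Fin.sum_univ_three, Matrix.vecHead, Matrix.vecTail] <;> norm_num
  · ext a b; fin_cases a <;> fin_cases b <;> simp [Matrix.transpose, Matrix.vecHead, Matrix.vecTail]
  · simp [Fin.sum_univ_three, Matrix.vecHead, Matrix.vecTail]; norm_num
  · rintro ⟨k, lam, w, hlam, _, hw, heq⟩
    have h00 := heq 0 0
    have h01 := heq 0 1
    simp at h00 h01
    have hz : ∀ i, lam i * w i 0 = 0 := by
      have hterm : ∀ i ∈ Finset.univ, (0:ℝ) ≤ lam i * (w i 0 * w i 0) := by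
        intro i _; exact mul_nonneg (hlam i) (mul_self_nonneg _)
      have := (Finset.sum_eq_zero_iff_of_nonneg hterm).mp h00.symm
      intro i
      have hi := this i (Finset.mem_univ i)
      rcases mul_eq_zero.mp hi with h | h
      · simp [h]
      · rcases mul_self_eq_zero.mp h with h'
        simp [h']
    have : ∑ i, lam i * (w i 0 * w i 1) = 0 := by
      apply Finset.sum_eq_zero
      intro i _
      have := hz i
      calc lam i * (w i 0 * w i 1) = (lam i * w i 0) * w i 1 := by ring
        _ = 0 := by rw [this]; ring
    rw [← h01] at this
    norm_num at this
end
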